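/- Fix a natural number L ≥ 2. Define S_IFSq(N) = 64·(L^{N+1} − L)/(L − 1) and S_IFS(N) = −N·L²/(L−1) + (L²/(L−1)) · Σ_{i=1}^{N} L^{L^{i-1}}. Then S_IFSq(N) = O(L^N) as N → ∞, and S_IFSq(N)/S_IFS(N) → 0 as N → ∞; in particular S_IFSq(N) is eventually strictly smaller than S_IFS(N). -/

import Mathlib

open Filter

/-- Total comparison count of the deterministic IFS algorithm with quadtree search,
bucket capacity `64`. -/
noncomputable def SIFSq (L N : ℕ) : ℝ :=
  64 * ((L : ℝ) ^ (N + 1) - (L : ℝ)) / ((L : ℝ) - 1)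

/-- Total comparison count of the deterministic IFS algorithm with worst-case linear
search. -/
noncomputable def SIFS (L N : ℕ) : ℝ :=
  -(N : ℝ) * (L : ℝ) ^ 2 / ((L : ℝ) - 1)
    + ((L : ℝ) ^ 2 / ((L : ℝ) - 1)) * ∑ i ∈ Finset.Icc 1 N, (L : ℝ) ^ (L ^ (i - 1))

/-- `S_IFSq(N) = O(L^N)`; moreover `S_IFSq(N)/S_IFS(N) → 0`, so `S_IFSq` is eventually
strictly smaller than `S_IFS`. -/
theorem SIFSq_bigO_and_lt_SIFS (L : ℕ) (hL : 2 ≤ L) :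
    (fun N : ℕ => SIFSq L N) =O[atTop] (fun N : ℕ => (L : ℝ) ^ N) ∧
    Tendsto (fun N : ℕ => SIFSq L N / SIFS L N) atTop (nhds 0) ∧
    ∀ᶠ N : ℕ in atTop, SIFSq L N < SIFS L N := by
  have hc : (2:ℝ) ≤ (L:ℝ) := by exact_mod_cast hL
  have hc0 : (0:ℝ) < (L:ℝ) := by linarith
  have hc1 : (1:ℝ) ≤ (L:ℝ) - 1 := by linarith
  have hc1pos : (0:ℝ) < (L:ℝ) - 1 := by linarith
  have hcne : (L:ℝ) ≠ 0 := ne_of_gt hc0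
  have h1ne : (L:ℝ) - 1 ≠ 0 := ne_of_gt hc1pos
  have hfac : (0:ℝ) < (L:ℝ)^2 / ((L:ℝ) - 1) := div_pos (by positivity) hc1pos
  -- SIFSq is nonnegative
  have hq_nonneg : ∀ N : ℕ, 0 ≤ SIFSq L N := by
    intro N
    have h1 : (L:ℝ) ≤ (L:ℝ) ^ (N+1) := le_self_pow₀ (by linarith) (Nat.succ_ne_zero N)
    unfold SIFSq
    apply div_nonneg _ (le_of_lt hc1pos)
    nlinarith
  -- upper bound on SIFSq
  have hq_le : ∀ N : ℕ, SIFSq L N ≤ 64 * (L:ℝ)^(N+1) / ((L:ℝ) - 1) := by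
    intro N
    unfold SIFSq
    apply div_le_div_of_nonneg_right _ hc1pos.le
    nlinarith
  -- lower bound on SIFS
  have hS_ge : ∀ k : ℕ, 1 ≤ k →
      ((L:ℝ)^2 / ((L:ℝ) - 1)) * (L:ℝ)^(L^k) ≤ SIFS L (k+1) := by
    intro k hk
    have hterm : ∀ i ∈ Finset.Icc 1 k, (2:ℝ) ≤ (L:ℝ) ^ (L ^ (i-1)) := by
      intro i hi
      have hLe : 1 ≤ L ^ (i-1) := Nat.one_le_pow _ _ (by omega)
      calc (2:ℝ) ≤ (L:ℝ) := hc
        _ ≤ (L:ℝ) ^ (L ^ (i-1)) := le_self_pow₀ (by linarith) (by omega)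
    have hcard : (Finset.Icc 1 k).card = k := by simp
    have hsum1 : (k:ℝ) * 2 ≤ ∑ i ∈ Finset.Icc 1 k, (L:ℝ) ^ (L ^ (i-1)) := by
      have := Finset.card_nsmul_le_sum (Finset.Icc 1 k)
        (fun i => (L:ℝ) ^ (L ^ (i-1))) 2 hterm
      rw [hcard] at this
      simpa [nsmul_eq_mul] using this
    have hsplit : ∑ i ∈ Finset.Icc 1 (k+1), (L:ℝ) ^ (L ^ (i-1))
        = (∑ i ∈ Finset.Icc 1 k, (L:ℝ) ^ (L ^ (i-1))) + (L:ℝ) ^ (L ^ k) := by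
      rw [Finset.sum_Icc_succ_top (by omega : 1 ≤ k+1)]
      simp
    have hsum : (L:ℝ)^(L^k) + ((k:ℝ)+1)
        ≤ ∑ i ∈ Finset.Icc 1 (k+1), (L:ℝ) ^ (L ^ (i-1)) := by
      rw [hsplit]
      have hk' : (1:ℝ) ≤ (k:ℝ) := by exact_mod_cast hk
      linarith
    have hmul := mul_le_mul_of_nonneg_left
      (by linarith : (L:ℝ)^(L^k)
        ≤ (∑ i ∈ Finset.Icc 1 (k+1), (L:ℝ) ^ (L ^ (i-1))) - ((k:ℝ)+1))
      (le_of_lt hfac)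
    unfold SIFS
    push_cast
    ring_nf at hmul ⊢; linarith
  -- nat inequality
  have hnat : ∀ j : ℕ, 2*j+8 ≤ 2^(j+3) := by
    intro j
    induction j with
    | zero => norm_num
    | succ n ih =>
      have h2 : (2:ℕ)^(n+1+3) = 2 * 2^(n+3) := by ring
      omega
  -- key eventual bound
  have key : ∀ᶠ N : ℕ in atTop,
      0 < SIFS L N ∧ SIFSq L N / SIFS L N ≤ 64 * (1/(L:ℝ))^N := by
    filter_upwards [eventually_ge_atTop 4] with N hN
    obtain ⟨k, rfl⟩ : ∃ k, N = (k+3) + 1 := ⟨N-4, by omega⟩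
    have hb := hS_ge (k+3) (by omega)
    have hBpos : 0 < ((L:ℝ)^2 / ((L:ℝ) - 1)) * (L:ℝ)^(L^(k+3)) := by
      apply mul_pos hfac (by positivity)
    have hSpos : 0 < SIFS L (k+3+1) := lt_of_lt_of_le hBpos hb
    refine ⟨hSpos, ?_⟩
    have hexp : (2*k+7 : ℕ) ≤ L^(k+3) := by
      have h1 := hnat k
      have h2 : (2:ℕ)^(k+3) ≤ L^(k+3) := Nat.pow_le_pow_left hL _
      omega
    have hpow : (L:ℝ)^(2*k+7) ≤ (L:ℝ)^(L^(k+3)) :=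
      pow_le_pow_right₀ (by linarith) hexp
    have step1 : SIFSq L (k+3+1) / SIFS L (k+3+1)
        ≤ SIFSq L (k+3+1) / (((L:ℝ)^2 / ((L:ℝ) - 1)) * (L:ℝ)^(L^(k+3))) :=
      div_le_div_of_nonneg_left (hq_nonneg _) hBpos hb
    have step2 : SIFSq L (k+3+1) / (((L:ℝ)^2 / ((L:ℝ) - 1)) * (L:ℝ)^(L^(k+3)))
        ≤ (64 * (L:ℝ)^(k+3+1+1) / ((L:ℝ) - 1))
          / (((L:ℝ)^2 / ((L:ℝ) - 1)) * (L:ℝ)^(L^(k+3))) :=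
      div_le_div_of_nonneg_right (hq_le _) hBpos.le
    have heq : 64 * (1/(L:ℝ))^(k+3+1) * (((L:ℝ)^2 / ((L:ℝ) - 1)) * (L:ℝ)^(2*k+7))
        = 64 * (L:ℝ)^(k+3+1+1) / ((L:ℝ) - 1) := by
      rw [one_div, inv_pow]
      field_simp
      ring
    have step3 : (64 * (L:ℝ)^(k+3+1+1) / ((L:ℝ) - 1))
        / (((L:ℝ)^2 / ((L:ℝ) - 1)) * (L:ℝ)^(L^(k+3))) ≤ 64 * (1/(L:ℝ))^(k+3+1) := by
      rw [div_le_iff₀ hBpos]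
      calc 64 * (L:ℝ)^(k+3+1+1) / ((L:ℝ) - 1)
          = 64 * (1/(L:ℝ))^(k+3+1) * (((L:ℝ)^2 / ((L:ℝ) - 1)) * (L:ℝ)^(2*k+7)) :=
            heq.symm
        _ ≤ 64 * (1/(L:ℝ))^(k+3+1) * (((L:ℝ)^2 / ((L:ℝ) - 1)) * (L:ℝ)^(L^(k+3))) := by
            apply mul_le_mul_of_nonneg_left _ (by positivity)
            exact mul_le_mul_of_nonneg_left hpow (le_of_lt hfac)
    exact le_trans step1 (le_trans step2 step3)
  have h2 : Tendsto (fun N : ℕ => SIFSq L N / SIFS L N) atTop (nhds 0) := by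
    apply squeeze_zero'
    · filter_upwards [key] with N hN
      exact div_nonneg (hq_nonneg N) (le_of_lt hN.1)
    · filter_upwards [key] with N hN
      exact hN.2
    · have hlt : 1/(L:ℝ) < 1 := by
        rw [div_lt_one hc0]; linarith
      have := (tendsto_pow_atTop_nhds_zero_of_lt_one (by positivity) hlt).const_mul
        (64:ℝ)
      simpa using this
  refine ⟨?_, h2, ?_⟩
  · rw [Asymptotics.isBigO_iff]
    refine ⟨64 * (L:ℝ), ?_⟩
    filter_upwards with N
    rw [Real.norm_eq_abs, Real.norm_eq_abs, abs_of_nonneg (hq_nonneg N),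
      abs_of_nonneg (by positivity : (0:ℝ) ≤ (L:ℝ)^N)]
    calc SIFSq L N ≤ 64 * (L:ℝ)^(N+1) / ((L:ℝ) - 1) := hq_le N
      _ ≤ 64 * (L:ℝ)^(N+1) := div_le_self (by positivity) hc1
      _ = 64 * (L:ℝ) * (L:ℝ)^N := by ring
  · filter_upwards [key, h2.eventually_lt_const zero_lt_one] with N hN hlt
    exact (div_lt_one hN.1).mp hlt
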